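/- Let A = (a_{ij}) be an n×n matrix (n ≥ 2) over a commutative ring with a_{nn} ≠ 0 (or over a field), and define the (n-1)×(n-1) matrix E by e_{ij} = a_{ij}·a_{nn} − a_{in}·a_{nj} for i,j = 1,…,n−1. Then a_{nn}^{n-2} · det A = det E. In particular, if a_{nn} is invertible, det A = det E / a_{nn}^{n-2}. -/

import Mathlib

open Matrix

section Aux

variable {R : Type*} [CommRing R]

/-- The condensed matrix for an `(m+1) × (m+1)` matrix with pivot at `Fin.last m`. -/
private def chioE {m : ℕ} (A : Matrix (Fin (m + 1)) (Fin (m + 1)) R) :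
    Matrix (Fin m) (Fin m) R :=
  Matrix.of fun i j =>
    A i.castSucc j.castSucc * A (Fin.last m) (Fin.last m) -
      A i.castSucc (Fin.last m) * A (Fin.last m) j.castSucc

private lemma chio_aux {m : ℕ} (A : Matrix (Fin (m + 1)) (Fin (m + 1)) R) :
    A (Fin.last m) (Fin.last m) ^ m * A.det
      = A (Fin.last m) (Fin.last m) * (chioE A).det := by
  set a : R := A (Fin.last m) (Fin.last m) with ha
  set L : Matrix (Fin (m + 1)) (Fin (m + 1)) R :=
    Matrix.of fun i k =>
      if i = Fin.last m then (if k = Fin.last m then (1 : R) else 0)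
      else if k = i then a else if k = Fin.last m then -(A i (Fin.last m)) else 0 with hL
  set M : Matrix (Fin (m + 1)) (Fin (m + 1)) R := L * A with hMdef
  -- L is upper triangular with determinant a^m
  have hLdet : L.det = a ^ m := by
    have htri : L.BlockTriangular id := by
      intro i j hij
      simp only [id] at hij
      have hjne : j ≠ Fin.last m := ne_of_lt (lt_of_lt_of_le hij (Fin.le_last i))
      have hji : j ≠ i := ne_of_lt hij
      by_cases hi : i = Fin.last m <;> simp [hL, hi, hjne, hji]
    rw [det_of_upperTriangular htri, Fin.prod_univ_castSucc]
    have h1 : ∀ i : Fin m, L i.castSucc i.castSucc = a := by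
      intro i
      have : i.castSucc ≠ Fin.last m := ne_of_lt (Fin.castSucc_lt_last i)
      simp [hL, this]
    have h2 : L (Fin.last m) (Fin.last m) = 1 := by simp [hL]
    rw [Finset.prod_congr rfl fun i _ => h1 i, h2, Finset.prod_const]
    simp
  -- entries of M
  have hM : ∀ i j, M i j =
      if i = Fin.last m then A (Fin.last m) j
      else a * A i j - A i (Fin.last m) * A (Fin.last m) j := by
    intro i j
    simp only [hMdef, Matrix.mul_apply, hL, Matrix.of_apply]
    by_cases hi : i = Fin.last m
    · simp [hi]
    · simp only [hi, if_false]
      have hsplit : ∀ k : Fin (m + 1),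
          (if k = i then a else if k = Fin.last m then -(A i (Fin.last m)) else 0) * A k j
            = (if k = i then a * A k j else 0)
              + (if k = Fin.last m then -(A i (Fin.last m)) * A k j else 0) := by
        intro k
        by_cases h1 : k = i <;> by_cases h2 : k = Fin.last m <;>
          simp_all
      rw [Finset.sum_congr rfl fun k _ => hsplit k, Finset.sum_add_distrib,
        Finset.sum_ite_eq' Finset.univ i, Finset.sum_ite_eq' Finset.univ (Fin.last m)]
      simp
      ring
  -- determinant of M by expansion along the last column
  have hMdet : M.det = a * (chioE A).det := by
    rw [det_succ_column M (Fin.last m)]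
    rw [Finset.sum_eq_single (Fin.last m)]
    · have hcorner : M (Fin.last m) (Fin.last m) = a := by rw [hM]; simp; exact ha.symm
      have hsub : M.submatrix (Fin.last m).succAbove (Fin.last m).succAbove = chioE A := by
        ext i j
        have hi : (i : Fin m).castSucc ≠ Fin.last m := ne_of_lt (Fin.castSucc_lt_last i)
        simp only [Matrix.submatrix_apply, Fin.succAbove_last, chioE, Matrix.of_apply]
        rw [hM]
        simp [hi]
        ring
      rw [hcorner, hsub]
      have : (-1 : R) ^ ((Fin.last m : ℕ) + (Fin.last m : ℕ)) = 1 := by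
        rw [← two_mul]
        simp [pow_mul]
      rw [this, one_mul]
    · intro i _ hi
      have : M i (Fin.last m) = 0 := by rw [hM]; simp [hi]; ring
      rw [this]
      ring
    · simp
  have := Matrix.det_mul L A
  rw [hLdet, hMdet] at this
  linear_combination -this

/-- The key cancellation-free identity, proved via the generic matrix of indeterminates. -/
private lemma chio_main {m : ℕ} (hm : 1 ≤ m) (A : Matrix (Fin (m + 1)) (Fin (m + 1)) R) :
    A (Fin.last m) (Fin.last m) ^ (m - 1) * A.det = (chioE A).det := by
  -- generic matrix over the polynomial ring
  set S := MvPolynomial (Fin (m + 1) × Fin (m + 1)) ℤ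
  set X : Matrix (Fin (m + 1)) (Fin (m + 1)) S :=
    Matrix.of fun i j => MvPolynomial.X (i, j) with hX
  obtain ⟨k, rfl⟩ : ∃ k, m = k + 1 := ⟨m - 1, by omega⟩
  have hgen : X (Fin.last (k + 1)) (Fin.last (k + 1)) ^ (k + 1 - 1) * X.det
      = (chioE X).det := by
    have h := chio_aux X
    have hpow : X (Fin.last (k + 1)) (Fin.last (k + 1)) ^ (k + 1)
        = X (Fin.last (k + 1)) (Fin.last (k + 1))
          * X (Fin.last (k + 1)) (Fin.last (k + 1)) ^ (k + 1 - 1) :=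
      pow_succ' _ _
    rw [hpow, mul_assoc] at h
    have hne : X (Fin.last (k + 1)) (Fin.last (k + 1)) ≠ 0 := by
      simp [hX]
      exact MvPolynomial.X_ne_zero _
    exact mul_left_cancel₀ hne h
  -- specialize via the evaluation homomorphism
  let φ : S →+* R := (MvPolynomial.aeval (fun p : Fin (k + 1 + 1) × Fin (k + 1 + 1) => A p.1 p.2)).toRingHom
  have hmap : X.map φ = A := by
    ext i j
    show (MvPolynomial.aeval fun p => A p.1 p.2) (MvPolynomial.X (i, j)) = A i j
    rw [MvPolynomial.aeval_X]
  have hXdet : φ X.det = A.det := by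
    rw [RingHom.map_det, RingHom.mapMatrix_apply, hmap]
  have hEdet : φ (chioE X).det = (chioE A).det := by
    rw [RingHom.map_det, RingHom.mapMatrix_apply]
    congr 1
    ext i j
    simp only [chioE, Matrix.map_apply, Matrix.of_apply, hX, φ, _root_.map_sub,
      _root_.map_mul, AlgHom.toRingHom_eq_coe, RingHom.coe_coe]
    rw [MvPolynomial.aeval_X, MvPolynomial.aeval_X, MvPolynomial.aeval_X, MvPolynomial.aeval_X]
  have := congrArg φ hgen
  rw [_root_.map_mul, map_pow, hXdet, hEdet] at this
  have hXll : φ (X (Fin.last (k + 1)) (Fin.last (k + 1)))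
      = A (Fin.last (k + 1)) (Fin.last (k + 1)) := by
    show (MvPolynomial.aeval fun p => A p.1 p.2)
        (MvPolynomial.X (Fin.last (k + 1), Fin.last (k + 1)))
      = A (Fin.last (k + 1)) (Fin.last (k + 1))
    rw [MvPolynomial.aeval_X]
  rw [hXll] at this
  exact this

end Aux

/-- Chiò's condensation method: for `n ≥ 2` and pivot `a_{nn} ≠ 0`,
`a_{nn}^(n-2) * det A = det E` where `e_{ij} = a_{ij}a_{nn} - a_{in}a_{nj}`;
in particular, if `a_{nn}` is invertible, `det A = det E / a_{nn}^(n-2)`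
(division expressed via `Ring.inverse`). -/
theorem chio_condensation {R : Type*} [CommRing R] {n : ℕ} (hn : 2 ≤ n)
    (A : Matrix (Fin n) (Fin n) R)
    (lastIdx : Fin n) (hlast : (lastIdx : ℕ) = n - 1)
    (ha : A lastIdx lastIdx ≠ 0)
    (E : Matrix (Fin (n - 1)) (Fin (n - 1)) R)
    (hE : ∀ i j : Fin (n - 1),
      E i j = A ⟨i, by have := i.isLt; omega⟩ ⟨j, by have := j.isLt; omega⟩ * A lastIdx lastIdx -
        A ⟨i, by have := i.isLt; omega⟩ lastIdx * A lastIdx ⟨j, by have := j.isLt; omega⟩) :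
    (A lastIdx lastIdx) ^ (n - 2) * A.det = E.det ∧
      (IsUnit (A lastIdx lastIdx) →
        A.det = Ring.inverse ((A lastIdx lastIdx) ^ (n - 2)) * E.det) := by
  obtain ⟨m, rfl⟩ : ∃ m, n = m + 1 := ⟨n - 1, by omega⟩
  have hm : 1 ≤ m := by omega
  have hlast' : lastIdx = Fin.last m := by
    ext
    simpa using hlast
  subst hlast'
  have hEeq : E = chioE A := by
    ext i j
    rw [hE i j]
    rfl
  have key : A (Fin.last m) (Fin.last m) ^ (m + 1 - 2) * A.det = E.det := by
    rw [hEeq, show m + 1 - 2 = m - 1 by omega]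
    exact chio_main hm A
  refine ⟨key, fun hu => ?_⟩
  rw [← key, Ring.inverse_mul_cancel_left _ _ (hu.pow _)]
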